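/- Let M, N, N₁ be positive integers with N₁ ≤ N, and for n₁ = 1, …, N₁ let h_{n₁} ∈ ℂ^M, ζ_{n₁} ≥ 0, and σ_a ∈ ℝ. Define p_{n₁}(w) = Σ_{η=1}^{N} |h_{n₁}^H w_η|² + σ_a², the max-min objective G(w, α) = min_{1 ≤ n₁ ≤ N₁} ζ_{n₁}(1 − α_{n₁}²)·p_{n₁}(w), and the surrogate Ĝ(w, α) = min_{1 ≤ n₁ ≤ N₁} ζ_{n₁}·p̆_{n₁}(w, α_{n₁}) at a fixed point (ŵ, α̂) with α̂ ∈ (0,1)^{N₁}, where p̆_{n₁}(w, α) = 2(1−α̂_{n₁}²)[Σ_η Re(conj(h_{n₁}^H ŵ_η)·(h_{n₁}^H w_η)) + σ_a²] − p_{n₁}(ŵ)(1−α̂_{n₁}²)²/(1−α²). Then for any (w, α) with α ∈ (0,1)^{N₁}, if Ĝ(w, α) ≥ Ĝ(ŵ, α̂), then G(w, α) ≥ G(ŵ, α̂). -/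

import Mathlib

/-- Hermitian inner product `h^H w = ∑ i, conj (h i) * w i` on `ℂ^M`
(conjugate-linear in `h`). -/
noncomputable def hermInner {M : ℕ} (h w : Fin M → ℂ) : ℂ :=
  ∑ i, (starRingEnd ℂ) (h i) * w i

/-- Total received RF power `p(w) = ∑ η, |h^H w_η|² + σa²`. -/
noncomputable def rfPower {M N : ℕ} (h : Fin M → ℂ) (σa : ℝ)
    (w : Fin N → Fin M → ℂ) : ℝ :=
  (∑ η, ‖hermInner h (w η)‖ ^ 2) + σa ^ 2

/-- Surrogate (minorant) of the harvested energy `(1 - α²) p(w)` obtained by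
linearization at the point `(wh, αh)`. -/
noncomputable def breve {M N : ℕ} (h : Fin M → ℂ) (σa : ℝ)
    (wh : Fin N → Fin M → ℂ) (αh : ℝ) (w : Fin N → Fin M → ℂ) (α : ℝ) : ℝ :=
  2 * (1 - αh ^ 2) *
      ((∑ η, ((starRingEnd ℂ) (hermInner h (wh η)) * hermInner h (w η)).re) + σa ^ 2) -
    rfPower h σa wh * (1 - αh ^ 2) ^ 2 / (1 - α ^ 2)

lemma breve_fixed {M N : ℕ} (h : Fin M → ℂ) (σa : ℝ)
    (wh : Fin N → Fin M → ℂ) (αh : ℝ) (hαh : αh ∈ Set.Ioo (0 : ℝ) 1) :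
    breve h σa wh αh wh αh = (1 - αh ^ 2) * rfPower h σa wh := by
  have hth : (0:ℝ) < 1 - αh ^ 2 := by nlinarith [hαh.1, hαh.2]
  have hX : (∑ η, ((starRingEnd ℂ) (hermInner h (wh η)) * hermInner h (wh η)).re)
      = ∑ η, ‖hermInner h (wh η)‖ ^ 2 := by
    refine Finset.sum_congr rfl fun η _ => ?_
    rw [Complex.sq_norm, Complex.normSq_apply, Complex.mul_re]
    simp [Complex.conj_re, Complex.conj_im]
  unfold breve rfPower
  rw [hX]
  field_simp
  ring

lemma breve_le {M N : ℕ} (h : Fin M → ℂ) (σa : ℝ)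
    (wh : Fin N → Fin M → ℂ) (αh : ℝ) (hαh : αh ∈ Set.Ioo (0 : ℝ) 1)
    (w : Fin N → Fin M → ℂ) (α : ℝ) (hα : α ∈ Set.Ioo (0 : ℝ) 1) :
    breve h σa wh αh w α ≤ (1 - α ^ 2) * rfPower h σa w := by
  set th : ℝ := 1 - αh ^ 2 with hthdef
  set t : ℝ := 1 - α ^ 2 with htdef
  have hth : (0:ℝ) < th := by nlinarith [hαh.1, hαh.2]
  have ht : (0:ℝ) < t := by nlinarith [hα.1, hα.2]
  have key : 2 * th * t * ((∑ η, ((starRingEnd ℂ) (hermInner h (wh η)) * hermInner h (w η)).re) + σa ^ 2)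
      ≤ th ^ 2 * rfPower h σa wh + t ^ 2 * rfPower h σa w := by
    have hsum : ∀ η, 2 * th * t * ((starRingEnd ℂ) (hermInner h (wh η)) * hermInner h (w η)).re
        ≤ th ^ 2 * ‖hermInner h (wh η)‖ ^ 2 + t ^ 2 * ‖hermInner h (w η)‖ ^ 2 := by
      intro η
      set z := hermInner h (wh η)
      set y := hermInner h (w η)
      have h1 : ((starRingEnd ℂ) z * y).re = z.re * y.re + z.im * y.im := by
        rw [Complex.mul_re]; simp [Complex.conj_re, Complex.conj_im]
      have h2 : ‖z‖ ^ 2 = z.re ^ 2 + z.im ^ 2 := by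
        rw [Complex.sq_norm, Complex.normSq_apply]; ring
      have h3 : ‖y‖ ^ 2 = y.re ^ 2 + y.im ^ 2 := by
        rw [Complex.sq_norm, Complex.normSq_apply]; ring
      rw [h1, h2, h3]
      nlinarith [sq_nonneg (th * z.re - t * y.re), sq_nonneg (th * z.im - t * y.im)]
    have hS : 2 * th * t * (∑ η, ((starRingEnd ℂ) (hermInner h (wh η)) * hermInner h (w η)).re)
        ≤ th ^ 2 * (∑ η, ‖hermInner h (wh η)‖ ^ 2)
          + t ^ 2 * (∑ η, ‖hermInner h (w η)‖ ^ 2) := by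
      rw [Finset.mul_sum, Finset.mul_sum, Finset.mul_sum, ← Finset.sum_add_distrib]
      exact Finset.sum_le_sum fun η _ => hsum η
    have hσ : 2 * th * t * σa ^ 2 ≤ th ^ 2 * σa ^ 2 + t ^ 2 * σa ^ 2 := by
      nlinarith [sq_nonneg (th - t), sq_nonneg σa]
    unfold rfPower
    nlinarith [hS, hσ]
  have hb : breve h σa wh αh w α
      = (2 * th * t * ((∑ η, ((starRingEnd ℂ) (hermInner h (wh η)) * hermInner h (w η)).re) + σa ^ 2)
         - rfPower h σa wh * th ^ 2) / t := by
    unfold breve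
    rw [← hthdef, ← htdef]
    field_simp
  rw [hb, div_le_iff₀ ht]
  nlinarith [key]

/-- Monotonic improvement for the max-min EH problem: if the minimum of the
surrogate per-user harvested energies at `(w, α)` is at least its value at the
linearization point `(wh, αh)`, then the minimum of the true per-user harvested
energies at `(w, α)` is at least its value at `(wh, αh)`. -/
theorem maxmin_eh_monotone_improvement (M N N₁ : ℕ) (hM : 0 < M) (hN : 0 < N)
    (hN₁ : 0 < N₁) (hle : N₁ ≤ N)
    (h : Fin N₁ → Fin M → ℂ) (ζ : Fin N₁ → ℝ) (hζ : ∀ n, 0 ≤ ζ n) (σa : ℝ)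
    (wh : Fin N → Fin M → ℂ) (αh : Fin N₁ → ℝ)
    (hαh : ∀ n, αh n ∈ Set.Ioo (0 : ℝ) 1)
    (w : Fin N → Fin M → ℂ) (α : Fin N₁ → ℝ)
    (hα : ∀ n, α n ∈ Set.Ioo (0 : ℝ) 1)
    (hne : (Finset.univ : Finset (Fin N₁)).Nonempty)
    (hsur : Finset.univ.inf' hne (fun n => ζ n * breve (h n) σa wh (αh n) w (α n)) ≥
            Finset.univ.inf' hne (fun n => ζ n * breve (h n) σa wh (αh n) wh (αh n))) :
    Finset.univ.inf' hne (fun n => ζ n * ((1 - α n ^ 2) * rfPower (h n) σa w)) ≥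
      Finset.univ.inf' hne (fun n => ζ n * ((1 - αh n ^ 2) * rfPower (h n) σa wh)) := by
  have heq : Finset.univ.inf' hne (fun n => ζ n * breve (h n) σa wh (αh n) wh (αh n))
      = Finset.univ.inf' hne (fun n => ζ n * ((1 - αh n ^ 2) * rfPower (h n) σa wh)) := by
    apply Finset.inf'_congr hne rfl
    intro n _
    rw [breve_fixed (h n) σa wh (αh n) (hαh n)]
  have hmono : Finset.univ.inf' hne (fun n => ζ n * breve (h n) σa wh (αh n) w (α n))
      ≤ Finset.univ.inf' hne (fun n => ζ n * ((1 - α n ^ 2) * rfPower (h n) σa w)) := by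
    apply Finset.le_inf'
    intro n _
    calc Finset.univ.inf' hne (fun n => ζ n * breve (h n) σa wh (αh n) w (α n))
        ≤ ζ n * breve (h n) σa wh (αh n) w (α n) :=
          Finset.inf'_le _ (Finset.mem_univ n)
      _ ≤ ζ n * ((1 - α n ^ 2) * rfPower (h n) σa w) :=
          mul_le_mul_of_nonneg_left (breve_le (h n) σa wh (αh n) (hαh n) w (α n) (hα n)) (hζ n)
  calc Finset.univ.inf' hne (fun n => ζ n * ((1 - αh n ^ 2) * rfPower (h n) σa wh))
      = Finset.univ.inf' hne (fun n => ζ n * breve (h n) σa wh (αh n) wh (αh n)) := heq.symm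
    _ ≤ Finset.univ.inf' hne (fun n => ζ n * breve (h n) σa wh (αh n) w (α n)) := hsur
    _ ≤ _ := hmono
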